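/- The space has constant type −2/3: for all X, Y, Z, W ∈ V one has g(G(X,Y),G(Z,W)) = −(2/3)·( g(X,Z)·g(Y,W) − g(X,W)·g(Y,Z) + g(JX,Z)·g(Y,JW) − g(JX,W)·g(Y,JZ) ). -/
import Mathlib


open Matrix

/-- The indefinite inner product `⟨a,b⟩ = -(1/2)·Trace(adj(a)·b)` on 2×2 real matrices. -/
noncomputable def ip (a b : Matrix (Fin 2) (Fin 2) ℝ) : ℝ :=
  -(1/2 : ℝ) * (a.adjugate * b).trace

/-- The product metric `⟨(α,β),(γ,δ)⟩_E = ⟨α,γ⟩ + ⟨β,δ⟩`. -/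
noncomputable def ipE (X Y : Matrix (Fin 2) (Fin 2) ℝ × Matrix (Fin 2) (Fin 2) ℝ) : ℝ :=
  ip X.1 Y.1 + ip X.2 Y.2

/-- The nearly Kähler metric `g`. -/
noncomputable def g (X Y : Matrix (Fin 2) (Fin 2) ℝ × Matrix (Fin 2) (Fin 2) ℝ) : ℝ :=
  (2/3 : ℝ) * ipE X Y - (1/3 : ℝ) * ipE (X.2, X.1) Y

/-- The almost complex structure `J(α,β) = (1/√3)·(α − 2β, 2α − β)`. -/
noncomputable def Jmap (X : Matrix (Fin 2) (Fin 2) ℝ × Matrix (Fin 2) (Fin 2) ℝ) :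
    Matrix (Fin 2) (Fin 2) ℝ × Matrix (Fin 2) (Fin 2) ℝ :=
  (Real.sqrt 3)⁻¹ • (X.1 - (2:ℝ) • X.2, (2:ℝ) • X.1 - X.2)

/-- The almost product structure `P(α,β) = (β,α)`. -/
def Pmap (X : Matrix (Fin 2) (Fin 2) ℝ × Matrix (Fin 2) (Fin 2) ℝ) :
    Matrix (Fin 2) (Fin 2) ℝ × Matrix (Fin 2) (Fin 2) ℝ :=
  (X.2, X.1)

/-- The cross product `α×β = (1/2)(αβ − βα)` on `sl(2,ℝ)`. -/
noncomputable def cross (a b : Matrix (Fin 2) (Fin 2) ℝ) : Matrix (Fin 2) (Fin 2) ℝ :=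
  (1/2 : ℝ) • (a * b - b * a)

/-- The tensor `G`. -/
noncomputable def Gmap (X Y : Matrix (Fin 2) (Fin 2) ℝ × Matrix (Fin 2) (Fin 2) ℝ) :
    Matrix (Fin 2) (Fin 2) ℝ × Matrix (Fin 2) (Fin 2) ℝ :=
  (2 / (3 * Real.sqrt 3)) •
    (-(cross X.1 Y.1) - cross X.1 Y.2 + cross Y.1 X.2 + (2:ℝ) • cross X.2 Y.2,
     -((2:ℝ) • cross X.1 Y.1) + cross X.1 Y.2 - cross Y.1 X.2 + cross X.2 Y.2)


lemma ip_eq (a b : Matrix (Fin 2) (Fin 2) ℝ) :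
    ip a b = -(1/2:ℝ) * (a 1 1 * b 0 0 - a 0 1 * b 1 0 - a 1 0 * b 0 1 + a 0 0 * b 1 1) := by
  simp [ip, Matrix.adjugate_fin_two, Matrix.trace_fin_two, Matrix.mul_apply, Fin.sum_univ_two,
    Matrix.vecMul, dotProduct]
  ring

lemma g_smul_left (c : ℝ) (A B : Matrix (Fin 2) (Fin 2) ℝ × Matrix (Fin 2) (Fin 2) ℝ) :
    g (c • A) B = c * g A B := by
  simp [g, ipE, ip_eq, Matrix.smul_apply, smul_eq_mul]; ring

lemma g_smul_right (c : ℝ) (A B : Matrix (Fin 2) (Fin 2) ℝ × Matrix (Fin 2) (Fin 2) ℝ) :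
    g A (c • B) = c * g A B := by
  simp [g, ipE, ip_eq, Matrix.smul_apply, smul_eq_mul]; ring

/-- The pseudo-nearly Kähler `SL(2,ℝ)×SL(2,ℝ)` has constant type `−2/3`. -/
theorem stmt_12 (X Y Z W : Matrix (Fin 2) (Fin 2) ℝ × Matrix (Fin 2) (Fin 2) ℝ)
    (hX1 : X.1.trace = 0) (hX2 : X.2.trace = 0)
    (hY1 : Y.1.trace = 0) (hY2 : Y.2.trace = 0)
    (hZ1 : Z.1.trace = 0) (hZ2 : Z.2.trace = 0)
    (hW1 : W.1.trace = 0) (hW2 : W.2.trace = 0) :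
    g (Gmap X Y) (Gmap Z W) =
      -(2/3 : ℝ) * (g X Z * g Y W - g X W * g Y Z
        + g (Jmap X) Z * g Y (Jmap W) - g (Jmap X) W * g Y (Jmap Z)) := by
  have hs : Real.sqrt 3 * Real.sqrt 3 = 3 := Real.mul_self_sqrt (by norm_num)
  have eX1 : X.1 1 1 = -X.1 0 0 := by have := Matrix.trace_fin_two X.1; rw [this] at hX1; linarith
  have eX2 : X.2 1 1 = -X.2 0 0 := by have := Matrix.trace_fin_two X.2; rw [this] at hX2; linarith
  have eY1 : Y.1 1 1 = -Y.1 0 0 := by have := Matrix.trace_fin_two Y.1; rw [this] at hY1; linarith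
  have eY2 : Y.2 1 1 = -Y.2 0 0 := by have := Matrix.trace_fin_two Y.2; rw [this] at hY2; linarith
  have eZ1 : Z.1 1 1 = -Z.1 0 0 := by have := Matrix.trace_fin_two Z.1; rw [this] at hZ1; linarith
  have eZ2 : Z.2 1 1 = -Z.2 0 0 := by have := Matrix.trace_fin_two Z.2; rw [this] at hZ2; linarith
  have eW1 : W.1 1 1 = -W.1 0 0 := by have := Matrix.trace_fin_two W.1; rw [this] at hW1; linarith
  have eW2 : W.2 1 1 = -W.2 0 0 := by have := Matrix.trace_fin_two W.2; rw [this] at hW2; linarith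
  have hc : ∀ r : ℝ, (2 / (3 * Real.sqrt 3)) * ((2 / (3 * Real.sqrt 3)) * r) = (4/27) * r := by
    intro r
    rw [← mul_assoc, div_mul_div_comm]
    congr 1
    rw [mul_mul_mul_comm, hs]
    norm_num
  have hi : ∀ r t : ℝ, ((Real.sqrt 3)⁻¹ * r) * ((Real.sqrt 3)⁻¹ * t) = (1/3) * (r * t) := by
    intro r t
    rw [mul_mul_mul_comm, ← mul_inv, hs]
    norm_num
  simp only [Gmap, Jmap]
  simp only [g_smul_left, g_smul_right]
  rw [hc, hi, hi]
  simp only [g, ipE, ip_eq, cross, Matrix.smul_apply, Matrix.add_apply, Matrix.sub_apply,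
    Matrix.neg_apply, Matrix.mul_apply, Fin.sum_univ_two, smul_eq_mul,
    eX1, eX2, eY1, eY2, eZ1, eZ2, eW1, eW2]
  ring
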